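/- Let f : (0,∞) → [0,∞) be nonincreasing, let F : (0,∞) → (0,∞) be any function, and suppose there are constants C > 0 and λ₀ > 0 such that ∫₀^∞ e^{−λt} f(t) dt ≤ C / (λ·F(1/√λ)) for every λ ∈ (0, λ₀]. Then f(t) ≤ 2·e·C / F(√t) for every t ≥ 1/λ₀. -/

import Mathlib

open MeasureTheory Filter

/-- If `f : (0,∞) → [0,∞)` is nonincreasing and its Laplace-type transform
satisfies `∫₀^∞ e^{−λt} f(t) dt ≤ C/(λ F(1/√λ))` for small `λ`, then
`f(t) ≤ 2eC/F(√t)` for `t ≥ 1/λ₀`. -/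
theorem stmt_5 (f F : ℝ → ℝ)
    (hf0 : ∀ t > (0:ℝ), 0 ≤ f t)
    (hfmono : AntitoneOn f (Set.Ioi (0:ℝ)))
    (hF : ∀ x > (0:ℝ), 0 < F x)
    (C l₀ : ℝ) (hC : 0 < C) (hl₀ : 0 < l₀)
    (h : ∀ l : ℝ, 0 < l → l ≤ l₀ →
      (∫⁻ t in Set.Ioi (0:ℝ), ENNReal.ofReal (Real.exp (-(l * t)) * f t)) ≤
        ENNReal.ofReal (C / (l * F (1 / Real.sqrt l)))) :
    ∀ t ≥ 1 / l₀, f t ≤ 2 * Real.exp 1 * C / F (Real.sqrt t) := by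
  intro t ht
  have ht0 : (0:ℝ) < t := lt_of_lt_of_le (by positivity) ht
  have hl : (0:ℝ) < 1 / t := by positivity
  have hl1 : 1 / t ≤ l₀ := by
    rw [div_le_iff₀ ht0]
    rw [ge_iff_le, div_le_iff₀ hl₀] at ht
    linarith [ht]
  have hsqrt : 1 / Real.sqrt (1 / t) = Real.sqrt t := by
    rw [one_div, one_div, Real.sqrt_inv, inv_inv]
  have hFt : 0 < F (Real.sqrt t) := hF _ (Real.sqrt_pos.2 ht0)
  have key := h (1 / t) hl hl1
  rw [hsqrt] at key
  -- lower bound the integral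
  have hsub : Set.Icc (t / 2) t ⊆ Set.Ioi (0:ℝ) := by
    intro s hs
    have := hs.1
    simp only [Set.mem_Ioi]
    linarith
  have hlow : ENNReal.ofReal (Real.exp (-1) * f t) * Measure.restrict volume (Set.Ioi (0:ℝ)) Set.univ ≥ 0 := zero_le
  have hstep1 : (∫⁻ s in Set.Icc (t/2) t, ENNReal.ofReal (Real.exp (-1) * f t)) ≤
      ∫⁻ s in Set.Icc (t/2) t, ENNReal.ofReal (Real.exp (-((1/t) * s)) * f s) := by
    refine setLIntegral_mono' measurableSet_Icc ?_
    intro s hs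
    have hs0 : (0:ℝ) < s := by have := hs.1; linarith
    have hst : s ≤ t := hs.2
    have hfs : f t ≤ f s := hfmono hs0 ht0 hst
    have hft : 0 ≤ f t := hf0 t ht0
    have hexp : Real.exp (-1) ≤ Real.exp (-((1/t) * s)) := by
      apply Real.exp_le_exp.2
      rw [neg_le_neg_iff]
      rw [one_div]
      calc t⁻¹ * s ≤ t⁻¹ * t := by
            apply mul_le_mul_of_nonneg_left hst (by positivity)
        _ = 1 := inv_mul_cancel₀ ht0.ne'
    exact ENNReal.ofReal_le_ofReal <| by
      calc Real.exp (-1) * f t ≤ Real.exp (-((1/t) * s)) * f t :=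
            mul_le_mul_of_nonneg_right hexp hft
        _ ≤ Real.exp (-((1/t) * s)) * f s :=
            mul_le_mul_of_nonneg_left hfs (Real.exp_pos _).le
  have hstep2 : (∫⁻ s in Set.Icc (t/2) t, ENNReal.ofReal (Real.exp (-((1/t) * s)) * f s)) ≤
      ∫⁻ s in Set.Ioi (0:ℝ), ENNReal.ofReal (Real.exp (-((1/t) * s)) * f s) :=
    lintegral_mono_set hsub
  have hconst : (∫⁻ s in Set.Icc (t/2) t, ENNReal.ofReal (Real.exp (-1) * f t)) =
      ENNReal.ofReal (Real.exp (-1) * f t) * ENNReal.ofReal (t/2) := by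
    rw [setLIntegral_const, Real.volume_Icc]
    congr 1
    ring_nf
  have hchain : ENNReal.ofReal (Real.exp (-1) * f t) * ENNReal.ofReal (t/2) ≤
      ENNReal.ofReal (C / ((1/t) * F (Real.sqrt t))) := by
    rw [← hconst]
    exact le_trans hstep1 (le_trans hstep2 key)
  have hft : 0 ≤ f t := hf0 t ht0
  rw [← ENNReal.ofReal_mul (by positivity)] at hchain
  have hrhs : 0 ≤ C / ((1/t) * F (Real.sqrt t)) := by positivity
  have hreal : Real.exp (-1) * f t * (t/2) ≤ C / ((1/t) * F (Real.sqrt t)) :=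
    (ENNReal.ofReal_le_ofReal_iff hrhs).1 hchain
  have hE : (0:ℝ) < Real.exp 1 := Real.exp_pos 1
  have hEinv : Real.exp (-1) = (Real.exp 1)⁻¹ := by
    rw [Real.exp_neg]
  rw [hEinv] at hreal
  have hrhs' : C / ((1/t) * F (Real.sqrt t)) = C * t / F (Real.sqrt t) := by
    field_simp
  rw [hrhs'] at hreal
  -- now: (exp 1)⁻¹ * f t * (t/2) ≤ C * t / F √t, want f t ≤ 2 * exp 1 * C / F √t
  rw [le_div_iff₀ hFt]
  rw [le_div_iff₀ hFt] at hreal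
  have h1 : (Real.exp 1)⁻¹ * Real.exp 1 = 1 := inv_mul_cancel₀ hE.ne'
  have hr2 : f t * (t / 2) * F (Real.sqrt t) ≤ Real.exp 1 * (C * t) := by
    calc f t * (t / 2) * F (Real.sqrt t)
        = Real.exp 1 * ((Real.exp 1)⁻¹ * f t * (t / 2) * F (Real.sqrt t)) := by
          field_simp
      _ ≤ Real.exp 1 * (C * t) := mul_le_mul_of_nonneg_left hreal hE.le
  nlinarith [hr2, ht0]
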